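/- Let a and b be integers with 0 < a < b such that a does not divide b, let [a₀, a₁, …, aₙ] be the continued fraction expansion of b/a, and suppose n ≥ 2. Let r = b − a₀·a (so 0 < r < a, the continued fraction of a/r is [a₁, …, aₙ], and r does not divide a). Then F(r, a) ≠ F(a, b). -/

import Mathlib

/-- `cf a b` is the continued fraction expansion `[a₀, a₁, …, aₙ]` of `b / a`
(for `0 < a`), computed by the Euclidean algorithm; the convention `aₙ > 1`
whenever `n > 0` holds automatically. -/
def cf (a b : ℕ) : List ℕ :=
  if h : a = 0 then [] else (b / a) :: cf (b % a) a
termination_by a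
decreasing_by exact Nat.mod_lt _ (Nat.pos_of_ne_zero h)

/-- `𝓙(a,b)`: the largest nonnegative integer `j < n` such that
`a₀ = a₁ = ⋯ = a_{j−1} ≤ a_j` in the continued fraction `[a₀, …, aₙ]` of `b / a`
(for `j = 0` the condition is vacuous). -/
def Jfun (a b : ℕ) : ℕ :=
  Nat.findGreatest
    (fun j => j + 1 < (cf a b).length ∧ (∀ i < j, (cf a b).getD i 0 = (cf a b).getD 0 0) ∧
      (cf a b).getD 0 0 ≤ (cf a b).getD j 0)
    ((cf a b).length - 2)

/-- `F(a,b) = ⌊b/a⌋` if `𝓙(a,b)` is even, and `F(a,b) = ⌊b/a⌋ − 1` if `𝓙(a,b)`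
is odd. -/
def F (a b : ℕ) : ℕ := if Even (Jfun a b) then b / a else b / a - 1

/-- For `0 < a < b` with `a ∤ b`, if the continued fraction expansion
`[a₀, …, aₙ]` of `b/a` has `n ≥ 2`, then with `r = b − a₀·a` one has
`F(r, a) ≠ F(a, b)`. -/
theorem F_ne_of_remainder (a b r : ℕ) (ha : 0 < a) (hab : a < b) (hnd : ¬ a ∣ b)
    (hn : 3 ≤ (cf a b).length) (hr : r = b - b / a * a) :
    F r a ≠ F a b := by
  have ha0 : a ≠ 0 := ha.ne'
  have hrval : r = b % a := by rw [hr, Nat.mod_def]; ring_nf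
  have hr0 : r ≠ 0 := by
    rw [hrval]; exact fun h => hnd (Nat.dvd_of_mod_eq_zero h)
  have hrpos : 0 < r := Nat.pos_of_ne_zero hr0
  have hra : r < a := hrval ▸ Nat.mod_lt _ ha
  have hcf : cf a b = (b / a) :: cf r a := by
    rw [cf]; simp [ha0, hrval]
  have hlen : (cf a b).length = (cf r a).length + 1 := by rw [hcf]; simp
  have hL'len : 2 ≤ (cf r a).length := by omega
  have hcf' : cf r a = (a / r) :: cf (a % r) r := by
    rw [cf]; simp [hr0]
  set a₀ := b / a with ha₀
  set a₁ := a / r with ha₁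
  have g0 : (cf a b).getD 0 0 = a₀ := by rw [hcf]; rfl
  have gs : ∀ i, (cf a b).getD (i + 1) 0 = (cf r a).getD i 0 := fun i => by rw [hcf]; rfl
  have g0' : (cf r a).getD 0 0 = a₁ := by rw [hcf']; rfl
  have g1 : (cf a b).getD 1 0 = a₁ := by rw [gs 0, g0']
  have ha₀1 : 1 ≤ a₀ := (Nat.one_le_div_iff ha).mpr hab.le
  have ha₁1 : 1 ≤ a₁ := (Nat.one_le_div_iff hrpos).mpr hra.le
  rcases lt_trichotomy a₁ a₀ with hlt | heq | hgt
  · -- a₁ < a₀ : Jfun a b = 0, F a b = a₀ > F r a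
    have hJ : Jfun a b = 0 := by
      unfold Jfun
      rw [Nat.findGreatest_eq_zero_iff]
      rintro k hk hkb ⟨hk1, hall, hle⟩
      rcases Nat.lt_or_ge k 2 with h2 | h2
      · interval_cases k
        rw [g1] at hle; omega
      · have := hall 1 (by omega)
        rw [g1, g0] at this; omega
    have hFab : F a b = a₀ := by unfold F; rw [hJ]; simp; rfl
    have : F r a ≤ a₁ := by unfold F; split <;> omega
    omega
  · -- a₁ = a₀ : Jfun a b = Jfun r a + 1
    have hJ'spec := (Nat.findGreatest_eq_iff.mp (rfl : Jfun r a = Jfun r a))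
    obtain ⟨hJ'le, hJ'P, hJ'gr⟩ := hJ'spec
    set J' := Jfun r a with hJ'def
    have hJ : Jfun a b = J' + 1 := by
      unfold Jfun
      rw [Nat.findGreatest_eq_iff]
      refine ⟨by omega, fun _ => ⟨?_, ?_, ?_⟩, ?_⟩
      · -- J' + 1 + 1 < length (cf a b)
        rcases Nat.eq_zero_or_pos J' with h0 | hpos
        · omega
        · have := (hJ'P (by omega)).1
          omega
      · rintro i hi
        rw [g0]
        match i, hi with
        | 0, _ => rw [g0]
        | (i+1), hi =>
          rw [gs i]
          have hJpos : 0 < J' := by omega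
          have := (hJ'P (by omega)).2.1 i (by omega)
          rw [g0'] at this; omega
      · rw [g0, gs J']
        rcases Nat.eq_zero_or_pos J' with h0 | hpos
        · rw [h0, g0']; omega
        · have := (hJ'P (by omega)).2.2
          rw [g0'] at this; omega
      · rintro k hk hkb ⟨hk1, hall, hle⟩
        have hk2 : 2 ≤ k := by omega
        refine hJ'gr (n := k - 1) (by omega) (by omega) ⟨by omega, ?_, ?_⟩
        · intro i hi
          have := hall (i + 1) (by omega)
          rw [gs i, g0] at this
          rw [g0', this, heq]
        · have hkk : k - 1 + 1 = k := by omega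
          have hh := hle
          rw [g0] at hh
          rw [g0']
          calc a₁ = a₀ := heq
            _ ≤ (cf a b).getD k 0 := hh
            _ = (cf r a).getD (k - 1) 0 := by rw [← gs (k - 1), hkk]
    unfold F
    rw [hJ]
    rcases Nat.even_or_odd J' with he | ho
    · have h1 : Even (Jfun r a) := he
      have h2 : ¬ Even (J' + 1) := by simp [Nat.even_add_one]; exact he
      rw [if_pos h1, if_neg h2]; omega
    · have h1 : ¬ Even (Jfun r a) := Nat.not_even_iff_odd.mpr ho
      have h2 : Even (J' + 1) := by rw [Nat.even_add_one]; exact h1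
      rw [if_neg h1, if_pos h2]; omega
  · -- a₀ < a₁ : Jfun a b = 1, F a b = a₀ - 1 < F r a
    have hJ : Jfun a b = 1 := by
      unfold Jfun
      rw [Nat.findGreatest_eq_iff]
      refine ⟨by omega, fun _ => ⟨by omega, ?_, ?_⟩, ?_⟩
      · intro i hi; interval_cases i; rfl
      · rw [g0, g1]; omega
      · rintro k hk hkb ⟨hk1, hall, hle⟩
        have := hall 1 (by omega)
        rw [g1, g0] at this; omega
    have hFab : F a b = a₀ - 1 := by unfold F; rw [hJ]; simp [Nat.not_even_iff_odd.mpr odd_one]; rfl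
    have : a₁ - 1 ≤ F r a := by unfold F; split <;> omega
    omega
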